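/- A dominant region R of the m-Shi arrangement of type A_{n−1}, with Shi tableau {e_{ij}}, has the hyperplane H_{α_{uv}, m} as a separating wall if and only if e_{uv} = m and e_{ut} + e_{t+1,v} = m − 1 for all t with u ≤ t < v. -/

import Mathlib

open Finset

namespace Shi

/-- Inner product of `x` with the positive root `α_{ij} = e_i - e_{j+1}` (0-indexed
`i ≤ j ≤ n-2`). -/
def inn (x : ℕ → ℝ) (i j : ℕ) : ℝ := x i - x (j + 1)

def SumZero (n : ℕ) (x : ℕ → ℝ) : Prop := ∑ i ∈ Finset.range n, x i = 0

/-- `x` is a point of the type `A_{n-1}` ambient space lying in the open dominant chamber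
and on no hyperplane of the `m`-Shi arrangement, hence an interior point of a dominant
`m`-Shi region. -/
def RegionPoint (n m : ℕ) (x : ℕ → ℝ) : Prop :=
  SumZero n x ∧
  (∀ i j, i ≤ j → j + 2 ≤ n → 0 < inn x i j) ∧
  (∀ i j, i ≤ j → j + 2 ≤ n → ∀ t : ℤ, -(m : ℤ) < t → t ≤ m → inn x i j ≠ (t : ℝ))

/-- `e` is the Shi tableau of the dominant `m`-Shi region containing `x`:
`e_{ij} = min(⌊⟨x, α_{ij}⟩⌋, m)`, which is constant on the region and equals
`min(k_{ij}, m)` for the Shi coordinates `k` of the `m`-minimal alcove of the region. -/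
def TabOf (n m : ℕ) (x : ℕ → ℝ) (e : ℕ → ℕ → ℤ) : Prop :=
  ∀ i j, i ≤ j → j + 2 ≤ n → e i j = min ⌊inn x i j⌋ (m : ℤ)

/-- `e` is the Shi tableau of some dominant region of the `m`-Shi arrangement of type
`A_{n-1}`. -/
def IsShiTab (n m : ℕ) (e : ℕ → ℕ → ℤ) : Prop :=
  ∃ x, RegionPoint n m x ∧ TabOf n m x e

/-- `p` lies in the closure of the `m`-Shi region containing `x`. -/
def InClosure (n m : ℕ) (x p : ℕ → ℝ) : Prop :=
  SumZero n p ∧ ∀ i j, i ≤ j → j + 2 ≤ n → ∀ t : ℤ, -(m : ℤ) < t → t ≤ m →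
    (((t : ℝ) < inn x i j → (t : ℝ) ≤ inn p i j) ∧ (inn x i j < t → inn p i j ≤ t))

/-- The hyperplane `H_{α_{uv}, m}` is a separating wall for the dominant `m`-Shi region
containing `x`: the region lies on the far side of the hyperplane from the fundamental
alcove, and the closure of the region contains a point of the hyperplane lying on no other
hyperplane of the arrangement (so the hyperplane supports a facet). -/
def SepWall (n m : ℕ) (x : ℕ → ℝ) (u v : ℕ) : Prop :=
  (m : ℝ) < inn x u v ∧
  ∃ p, InClosure n m x p ∧ inn p u v = (m : ℝ) ∧
    ∀ i j, i ≤ j → j + 2 ≤ n → ∀ t : ℤ, -(m : ℤ) < t → t ≤ m →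
      ¬(i = u ∧ j = v ∧ t = (m : ℤ)) → inn p i j ≠ (t : ℝ)

/-- The combinatorial criterion for `H_{α_{uv}, m}` to be a separating wall. -/
def SepCrit (m : ℕ) (e : ℕ → ℕ → ℤ) (u v : ℕ) : Prop :=
  e u v = (m : ℤ) ∧ ∀ t, u ≤ t → t < v → e u t + e (t + 1) v = (m : ℤ) - 1

/-- The region with Shi tableau `e` has `H_{α_{uv}, m}` as a separating wall. -/
def SepWallTab (n m : ℕ) (e : ℕ → ℕ → ℤ) (u v : ℕ) : Prop :=
  ∃ x, RegionPoint n m x ∧ TabOf n m x e ∧ SepWall n m x u v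

/-- A tableau function normalized to be `0` outside the staircase index domain. -/
def Normalized (n : ℕ) (e : ℕ → ℕ → ℤ) : Prop :=
  ∀ i j, ¬(i ≤ j ∧ j + 2 ≤ n) → e i j = 0

/-- pairwise facts for a region point, in coordinate-pair form `k < l ≤ n-1`. -/
def Good (n m : ℕ) (x : ℕ → ℝ) : Prop :=
  ∀ k l : ℕ, k < l → l + 1 ≤ n →
    0 < x k - x l ∧ ∀ t : ℤ, -(m : ℤ) < t → t ≤ m → x k - x l ≠ (t : ℝ)

lemma good_of_region {n m : ℕ} {x : ℕ → ℝ} (hx : RegionPoint n m x) :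
    Good n m x := by
  obtain ⟨-, hpos, hni⟩ := hx
  intro k l hkl hln
  have h1 : k ≤ l - 1 := by omega
  have h2 : (l - 1) + 2 ≤ n := by omega
  have h3 : (l - 1) + 1 = l := by omega
  constructor
  · have := hpos k (l-1) h1 h2; rwa [inn, h3] at this
  · intro t ht1 ht2
    have := hni k (l-1) h1 h2 t ht1 ht2; rwa [inn, h3] at this

/-- extended tableau entry for coordinate pair `k < l`. -/
noncomputable def Ee (m : ℕ) (x : ℕ → ℝ) (k l : ℕ) : ℤ := min ⌊x k - x l⌋ (m : ℤ)

section EeFacts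

variable {n m : ℕ} {x : ℕ → ℝ} {k l : ℕ}

lemma Ee_nonneg (hg : Good n m x) (hkl : k < l) (hl : l + 1 ≤ n) :
    0 ≤ Ee m x k l :=
  le_min (Int.floor_nonneg.2 (hg k l hkl hl).1.le) (by positivity)

lemma Ee_le : Ee m x k l ≤ (m : ℤ) := min_le_right _ _

lemma Ee_floor_le : Ee m x k l ≤ ⌊x k - x l⌋ := min_le_left _ _

lemma Ee_short (hm : 1 ≤ m) (hg : Good n m x) (hkl : k < l) (hl : l + 1 ≤ n)
    (h : Ee m x k l < (m : ℤ)) :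
    (Ee m x k l : ℝ) < x k - x l ∧ x k - x l < (Ee m x k l : ℝ) + 1 := by
  have hfl : ⌊x k - x l⌋ < (m : ℤ) := by
    by_contra hc
    push_neg at hc
    rw [Ee, min_eq_right hc] at h
    omega
  have hEeq : Ee m x k l = ⌊x k - x l⌋ := min_eq_left hfl.le
  have hpos := (hg k l hkl hl).1
  have h0 : 0 ≤ ⌊x k - x l⌋ := Int.floor_nonneg.2 hpos.le
  have hne := (hg k l hkl hl).2 ⌊x k - x l⌋ (by
      have : (1:ℤ) ≤ (m:ℤ) := by exact_mod_cast hm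
      omega) hfl.le
  constructor
  · rw [hEeq]
    exact lt_of_le_of_ne (Int.floor_le _) (fun hh => hne hh.symm)
  · rw [hEeq]
    exact Int.lt_floor_add_one _

lemma Ee_long (hm : 1 ≤ m) (hg : Good n m x) (hkl : k < l) (hl : l + 1 ≤ n)
    (h : Ee m x k l = (m : ℤ)) : (m : ℝ) < x k - x l := by
  have hfl : (m : ℤ) ≤ ⌊x k - x l⌋ := by
    by_contra hc
    push_neg at hc
    rw [Ee, min_eq_left hc.le] at h
    omega
  have hle : (m : ℝ) ≤ x k - x l := by
    have := Int.le_floor.1 hfl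
    exact_mod_cast this
  have hne := (hg k l hkl hl).2 (m : ℤ) (by
      have : (1:ℤ) ≤ (m:ℤ) := by exact_mod_cast hm
      omega) le_rfl
  push_cast at hne
  exact lt_of_le_of_ne hle (fun hh => hne hh.symm)

lemma Ee_eq_m (h : (m : ℝ) < x k - x l) : Ee m x k l = (m : ℤ) :=
  min_eq_right (Int.le_floor.2 (by exact_mod_cast h.le))

end EeFacts

lemma floor_add_le' (A B : ℝ) : ⌊A⌋ + ⌊B⌋ ≤ ⌊A + B⌋ :=
  Int.le_floor.2 (by push_cast; exact add_le_add (Int.floor_le A) (Int.floor_le B))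

lemma floor_add_ge' (A B : ℝ) : ⌊A + B⌋ ≤ ⌊A⌋ + ⌊B⌋ + 1 := by
  have h1 := Int.lt_floor_add_one A
  have h2 := Int.lt_floor_add_one B
  have : A + B < ((⌊A⌋ + ⌊B⌋ + 1 : ℤ) : ℝ) + 1 := by push_cast; linarith
  have := Int.floor_lt.2 (by push_cast at this ⊢; linarith :
    A + B < ((⌊A⌋ + ⌊B⌋ + 2 : ℤ) : ℝ))
  omega

section A12

variable {n m : ℕ} {x : ℕ → ℝ} {k k' l : ℕ}

lemma A1 (hkk' : k < k') (hk'l : k' < l)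
    (h : Ee m x k l < (m : ℤ)) :
    Ee m x k k' + Ee m x k' l ≤ Ee m x k l := by
  have hfl : ⌊x k - x l⌋ < (m : ℤ) := by
    by_contra hc
    push_neg at hc
    rw [Ee, min_eq_right hc] at h
    omega
  have hEeq : Ee m x k l = ⌊x k - x l⌋ := min_eq_left hfl.le
  have hsplit : x k - x l = (x k - x k') + (x k' - x l) := by ring
  calc Ee m x k k' + Ee m x k' l ≤ ⌊x k - x k'⌋ + ⌊x k' - x l⌋ :=
        add_le_add Ee_floor_le Ee_floor_le
    _ ≤ ⌊(x k - x k') + (x k' - x l)⌋ := floor_add_le' _ _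
    _ = Ee m x k l := by rw [hEeq, hsplit]

lemma A2 (hg : Good n m x) (hkk' : k < k') (hk'l : k' < l) (hl : l + 1 ≤ n) :
    Ee m x k l ≤ Ee m x k k' + Ee m x k' l + 1 := by
  have hnn1 : 0 ≤ Ee m x k k' := Ee_nonneg hg hkk' (by omega)
  have hnn2 : 0 ≤ Ee m x k' l := Ee_nonneg hg hk'l hl
  rcases eq_or_lt_of_le (Ee_le : Ee m x k k' ≤ (m:ℤ)) with h1 | h1
  · have := (Ee_le : Ee m x k l ≤ (m:ℤ))
    omega
  rcases eq_or_lt_of_le (Ee_le : Ee m x k' l ≤ (m:ℤ)) with h2 | h2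
  · have := (Ee_le : Ee m x k l ≤ (m:ℤ))
    omega
  have hf1 : Ee m x k k' = ⌊x k - x k'⌋ := by
    have : ⌊x k - x k'⌋ < (m:ℤ) := by
      by_contra hc; push_neg at hc; rw [Ee, min_eq_right hc] at h1; omega
    exact min_eq_left this.le
  have hf2 : Ee m x k' l = ⌊x k' - x l⌋ := by
    have : ⌊x k' - x l⌋ < (m:ℤ) := by
      by_contra hc; push_neg at hc; rw [Ee, min_eq_right hc] at h2; omega
    exact min_eq_left this.le
  have hsplit : x k - x l = (x k - x k') + (x k' - x l) := by ring
  calc Ee m x k l ≤ ⌊x k - x l⌋ := Ee_floor_le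
    _ = ⌊(x k - x k') + (x k' - x l)⌋ := by rw [hsplit]
    _ ≤ ⌊x k - x k'⌋ + ⌊x k' - x l⌋ + 1 := floor_add_ge' _ _
    _ = Ee m x k k' + Ee m x k' l + 1 := by rw [hf1, hf2]

end A12

/-- invariant: `z` realizes the extended tableau strictly on all pairs in `[a,b]`,
except the pair `(u, v+1)` where it attains the value `m` exactly. -/
def Inv (m : ℕ) (x : ℕ → ℝ) (u v a b : ℕ) (z : ℕ → ℝ) : Prop :=
  ∀ k l, a ≤ k → k < l → l ≤ b →
    ((k = u ∧ l = v + 1) → z k - z l = (m : ℝ)) ∧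
    (¬(k = u ∧ l = v + 1) → Ee m x k l = (m : ℤ) → (m : ℝ) < z k - z l) ∧
    (¬(k = u ∧ l = v + 1) → Ee m x k l < (m : ℤ) →
      (Ee m x k l : ℝ) < z k - z l ∧ z k - z l < (Ee m x k l : ℝ) + 1)

section Build

variable {n m : ℕ} {x : ℕ → ℝ} {e : ℕ → ℕ → ℤ} {u v : ℕ}

lemma base_inv (hm : 1 ≤ m) (hg : Good n m x) (he : TabOf n m x e)
    (huv : u ≤ v) (hv : v + 2 ≤ n)
    (hcrit : ∀ t, u ≤ t → t < v → e u t + e (t + 1) v = (m : ℤ) - 1) :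
    ∃ z, Inv m x u v u (v + 1) z := by
  refine ⟨Function.update x (v+1) (x (v+1) + ((x u - x (v+1)) - m)), ?_⟩
  intro k l hak hkl hlb
  have hkne : k ≠ v + 1 := by omega
  rw [Function.update_of_ne hkne]
  by_cases hl : l = v + 1
  · subst hl
    rw [Function.update_self]
    by_cases hk : k = u
    · subst hk
      refine ⟨fun _ => by ring, fun hne _ => absurd ⟨rfl, rfl⟩ hne, fun hne _ => absurd ⟨rfl, rfl⟩ hne⟩
    · -- u < k ≤ v, use criterion at t = k - 1
      have huk : u < k := lt_of_le_of_ne hak (Ne.symm hk)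
      have hkv : k ≤ v := by omega
      have h1 : u ≤ k - 1 := by omega
      have h2 : (k - 1) + 2 ≤ n := by omega
      have h3 : (k - 1) + 1 = k := by omega
      have hc := hcrit (k - 1) h1 (by omega)
      rw [h3] at hc
      have heu : e u (k-1) = Ee m x u k := by
        rw [he u (k-1) h1 h2, Ee, inn, h3]
      have hek : e k v = Ee m x k (v+1) := by
        rw [he k v hkv hv, Ee, inn]
      rw [heu, hek] at hc
      have hnn1 : 0 ≤ Ee m x u k := Ee_nonneg hg huk (by omega)
      have hnn2 : 0 ≤ Ee m x k (v+1) := Ee_nonneg hg (by omega) (by omega)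
      have hE1m : Ee m x u k < (m : ℤ) := by omega
      have hE2m : Ee m x k (v+1) < (m : ℤ) := by omega
      have hs := Ee_short hm hg huk (by omega) hE1m
      have hcR : (Ee m x u k : ℝ) + (Ee m x k (v+1) : ℝ) = (m : ℝ) - 1 := by
        exact_mod_cast congrArg (Int.cast : ℤ → ℝ) hc
      refine ⟨fun hex => absurd hex.1 hk, fun _ hEm => by omega, fun _ _ => ?_⟩
      constructor <;> [skip; skip] <;> nlinarith [hs.1, hs.2]
  · -- l ≤ v : both coordinates unchanged
    have hlv : l ≤ v := by omega
    have hlne : l ≠ v + 1 := by omega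
    rw [Function.update_of_ne hlne]
    have hln : l + 1 ≤ n := by omega
    refine ⟨fun hex => absurd hex.2 hlne, fun _ hEm => Ee_long hm hg hkl hln hEm,
      fun _ hElt => Ee_short hm hg hkl hln hElt⟩


lemma rstep (hm : 1 ≤ m) (hg : Good n m x) {a b : ℕ}
    (hau : a ≤ u) (huv : u ≤ v) (hvb : v + 1 ≤ b) (hbn : b + 2 ≤ n)
    (hlong : (m : ℝ) < x u - x (v+1))
    {z : ℕ → ℝ} (hz : Inv m x u v a b z) :
    ∃ z', Inv m x u v a (b+1) z' := by
  have hne : (Finset.Icc a b).Nonempty := ⟨u, Finset.mem_Icc.2 ⟨hau, by omega⟩⟩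
  have key : ∀ k ∈ Finset.Icc a b, ∀ k' ∈ Finset.Icc a b,
      Ee m x k (b+1) < (m : ℤ) →
      z k - (Ee m x k (b+1) : ℝ) - 1 < z k' - (Ee m x k' (b+1) : ℝ) := by
    intro k hk k' hk' hshort
    rw [Finset.mem_Icc] at hk hk'
    rcases lt_trichotomy k k' with hlt | heq | hgt
    · obtain ⟨hex, hlongB, hshortB⟩ := hz k k' hk.1 hlt hk'.2
      by_cases hexc : k = u ∧ k' = v + 1
      · exfalso
        obtain ⟨hku, hk'v⟩ := hexc
        subst hku
        have hp : 0 < x (v+1) - x (b+1) := (hg (v+1) (b+1) (by omega) (by omega)).1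
        have hEul : Ee m x k (b+1) = (m:ℤ) := Ee_eq_m (by linarith)
        omega
      rcases eq_or_lt_of_le (Ee_le : Ee m x k k' ≤ (m:ℤ)) with hE | hE
      · exfalso
        have hA := A1 (m := m) (x := x) hlt (show k' < b+1 by omega) hshort
        have hnn := Ee_nonneg hg (show k' < b+1 by omega) (show (b+1)+1 ≤ n by omega)
        omega
      · have hb := hshortB hexc hE
        have hA := A1 (m := m) (x := x) hlt (show k' < b+1 by omega) hshort
        have hAR : (Ee m x k k' : ℝ) + (Ee m x k' (b+1) : ℝ) ≤ (Ee m x k (b+1) : ℝ) := by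
          exact_mod_cast hA
        linarith [hb.2]
    · subst heq; linarith
    · obtain ⟨hex, hlongB, hshortB⟩ := hz k' k hk'.1 hgt hk.2
      have hnn1 : (0:ℝ) ≤ (Ee m x k (b+1) : ℝ) := by
        exact_mod_cast Ee_nonneg hg (show k < b+1 by omega) (show (b+1)+1 ≤ n by omega)
      have hle2 : (Ee m x k' (b+1) : ℝ) ≤ (m:ℝ) := by exact_mod_cast (Ee_le : Ee m x k' (b+1) ≤ (m:ℤ))
      have hm1 : (1:ℝ) ≤ (m:ℝ) := by exact_mod_cast hm
      by_cases hexc : k' = u ∧ k = v + 1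
      · have hzz := hex hexc
        linarith
      rcases eq_or_lt_of_le (Ee_le : Ee m x k' k ≤ (m:ℤ)) with hE | hE
      · have hzz := hlongB hexc hE
        linarith
      · have hb := hshortB hexc hE
        have hA := A2 hg hgt (show k < b+1 by omega) (show (b+1)+1 ≤ n by omega)
        have hAR : (Ee m x k' (b+1) : ℝ) ≤ (Ee m x k' k : ℝ) + (Ee m x k (b+1) : ℝ) + 1 := by
          exact_mod_cast hA
        linarith [hb.1]
  set U : ℝ := (Finset.Icc a b).inf' hne (fun k => z k - (Ee m x k (b+1) : ℝ)) with hU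
  set M : ℝ := (Finset.Icc a b).sup' hne
      (fun k => if Ee m x k (b+1) < (m:ℤ) then z k - (Ee m x k (b+1) : ℝ) - 1 else U - 1) with hM
  have hMU : M < U := by
    rw [hM, Finset.sup'_lt_iff]
    intro k hk
    by_cases hs : Ee m x k (b+1) < (m:ℤ)
    · rw [if_pos hs, hU, Finset.lt_inf'_iff]
      intro k' hk'
      exact key k hk k' hk' hs
    · rw [if_neg hs]; linarith
  refine ⟨Function.update z (b+1) ((M + U)/2), ?_⟩
  intro k l hak hkl hlb
  by_cases hl : l = b + 1
  · subst hl
    have hkb : k ≤ b := by omega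
    have hkne : k ≠ b + 1 := by omega
    rw [Function.update_of_ne hkne, Function.update_self]
    have hkm : k ∈ Finset.Icc a b := Finset.mem_Icc.2 ⟨hak, hkb⟩
    have hUle : U ≤ z k - (Ee m x k (b+1) : ℝ) := by
      rw [hU]; exact Finset.inf'_le _ hkm
    refine ⟨fun h => absurd h.2 (by omega), fun _ hEm => ?_, fun _ hElt => ?_⟩
    · rw [hEm] at hUle; push_cast at hUle; linarith
    · have hMge : z k - (Ee m x k (b+1) : ℝ) - 1 ≤ M := by
        rw [hM]
        have := Finset.le_sup' (fun k => if Ee m x k (b+1) < (m:ℤ) then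
          z k - (Ee m x k (b+1) : ℝ) - 1 else U - 1) hkm
        rwa [if_pos hElt] at this
      constructor <;> linarith
  · have hlb' : l ≤ b := by omega
    rw [Function.update_of_ne (show k ≠ b+1 by omega),
       Function.update_of_ne (show l ≠ b+1 by omega)]
    exact hz k l hak hkl hlb'

lemma lstep (hm : 1 ≤ m) (hg : Good n m x) {a b : ℕ}
    (hau : a < u) (huv : u ≤ v) (hvb : v + 1 ≤ b) (hbn : b + 1 ≤ n)
    (hlong : (m : ℝ) < x u - x (v+1))
    {z : ℕ → ℝ} (hz : Inv m x u v (a+1) b z) :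
    ∃ z', Inv m x u v a b z' := by
  have hne : (Finset.Icc (a+1) b).Nonempty := ⟨u, Finset.mem_Icc.2 ⟨by omega, by omega⟩⟩
  have key : ∀ l ∈ Finset.Icc (a+1) b, ∀ l' ∈ Finset.Icc (a+1) b,
      Ee m x a l' < (m : ℤ) →
      z l + (Ee m x a l : ℝ) < z l' + (Ee m x a l' : ℝ) + 1 := by
    intro l hl l' hl' hshort
    rw [Finset.mem_Icc] at hl hl'
    rcases lt_trichotomy l l' with hlt | heq | hgt
    · obtain ⟨hex, hlongB, hshortB⟩ := hz l l' hl.1 hlt hl'.2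
      by_cases hexc : l = u ∧ l' = v + 1
      · exfalso
        obtain ⟨hlu, hl'v⟩ := hexc
        subst hl'v
        have hp : 0 < x a - x u := (hg a u (by omega) (by omega)).1
        have hEul : Ee m x a (v+1) = (m:ℤ) := Ee_eq_m (by linarith)
        omega
      rcases eq_or_lt_of_le (Ee_le : Ee m x l l' ≤ (m:ℤ)) with hE | hE
      · exfalso
        have hA := A1 (m := m) (x := x) (show a < l by omega) hlt hshort
        have hnn := Ee_nonneg hg (show a < l by omega) (show l+1 ≤ n by omega)
        omega
      · have hb := hshortB hexc hE
        have hA := A1 (m := m) (x := x) (show a < l by omega) hlt hshort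
        have hAR : (Ee m x a l : ℝ) + (Ee m x l l' : ℝ) ≤ (Ee m x a l' : ℝ) := by
          exact_mod_cast hA
        linarith [hb.2]
    · subst heq; linarith
    · obtain ⟨hex, hlongB, hshortB⟩ := hz l' l hl'.1 hgt hl.2
      have hnn1 : (0:ℝ) ≤ (Ee m x a l' : ℝ) := by
        exact_mod_cast Ee_nonneg hg (show a < l' by omega) (show l'+1 ≤ n by omega)
      have hle2 : (Ee m x a l : ℝ) ≤ (m:ℝ) := by exact_mod_cast (Ee_le : Ee m x a l ≤ (m:ℤ))
      have hm1 : (1:ℝ) ≤ (m:ℝ) := by exact_mod_cast hm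
      by_cases hexc : l' = u ∧ l = v + 1
      · have hzz := hex hexc
        linarith
      rcases eq_or_lt_of_le (Ee_le : Ee m x l' l ≤ (m:ℤ)) with hE | hE
      · have hzz := hlongB hexc hE
        linarith
      · have hb := hshortB hexc hE
        have hA := A2 hg (show a < l' by omega) hgt (show l+1 ≤ n by omega)
        have hAR : (Ee m x a l : ℝ) ≤ (Ee m x a l' : ℝ) + (Ee m x l' l : ℝ) + 1 := by
          exact_mod_cast hA
        linarith [hb.1]
  set L : ℝ := (Finset.Icc (a+1) b).sup' hne (fun l => z l + (Ee m x a l : ℝ)) with hL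
  set W : ℝ := (Finset.Icc (a+1) b).inf' hne
      (fun l => if Ee m x a l < (m:ℤ) then z l + (Ee m x a l : ℝ) + 1 else L + 1) with hW
  have hLW : L < W := by
    rw [hW, Finset.lt_inf'_iff]
    intro l' hl'
    by_cases hs : Ee m x a l' < (m:ℤ)
    · rw [if_pos hs, hL, Finset.sup'_lt_iff]
      intro l hl
      exact key l hl l' hl' hs
    · rw [if_neg hs]; linarith
  refine ⟨Function.update z a ((L + W)/2), ?_⟩
  intro k l hak hkl hlb
  by_cases hk : k = a
  · rw [hk]
    have hla : a + 1 ≤ l := by omega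
    rw [Function.update_self, Function.update_of_ne (show l ≠ a by omega)]
    have hlm : l ∈ Finset.Icc (a+1) b := Finset.mem_Icc.2 ⟨hla, hlb⟩
    have hLge : z l + (Ee m x a l : ℝ) ≤ L := by
      rw [hL]
      exact Finset.le_sup' (f := fun l => z l + (Ee m x a l : ℝ)) hlm
    refine ⟨fun h => absurd h.1 (by omega), fun _ hEm => ?_, fun _ hElt => ?_⟩
    · rw [hEm] at hLge; push_cast at hLge; linarith
    · have hWle : W ≤ z l + (Ee m x a l : ℝ) + 1 := by
        rw [hW]
        have := Finset.inf'_le (fun l => if Ee m x a l < (m:ℤ) then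
          z l + (Ee m x a l : ℝ) + 1 else L + 1) hlm
        rwa [if_pos hElt] at this
      constructor <;> linarith
  · have hak' : a + 1 ≤ k := by omega
    rw [Function.update_of_ne hk, Function.update_of_ne (show l ≠ a by omega)]
    exact hz k l hak' hkl hlb


lemma build_all (hn : 2 ≤ n) (hm : 1 ≤ m) (hg : Good n m x) (he : TabOf n m x e)
    (huv : u ≤ v) (hv : v + 2 ≤ n)
    (hlong : (m : ℝ) < x u - x (v+1))
    (hcrit : ∀ t, u ≤ t → t < v → e u t + e (t + 1) v = (m : ℤ) - 1) :
    ∃ z, Inv m x u v 0 (n-1) z := by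
  have hR : ∀ s, v + 1 + s + 1 ≤ n → ∃ z, Inv m x u v u (v + 1 + s) z := by
    intro s
    induction s with
    | zero => exact fun _ => base_inv hm hg he huv hv hcrit
    | succ s ih =>
      intro hs
      obtain ⟨z, hz⟩ := ih (by omega)
      obtain ⟨z', hz'⟩ := rstep (u := u) (v := v) hm hg le_rfl huv (by omega) (by omega) hlong hz
      refine ⟨z', ?_⟩
      have : v + 1 + s + 1 = v + 1 + (s + 1) := by omega
      rwa [this] at hz'
  obtain ⟨z0, hz0⟩ := hR (n - 1 - (v+1)) (by omega)
  have hb : v + 1 + (n - 1 - (v+1)) = n - 1 := by omega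
  rw [hb] at hz0
  have hL : ∀ s, s ≤ u → ∃ z, Inv m x u v (u - s) (n-1) z := by
    intro s
    induction s with
    | zero => exact fun _ => ⟨z0, by simpa using hz0⟩
    | succ s ih =>
      intro hs
      obtain ⟨z, hz⟩ := ih (by omega)
      have h1 : u - s = (u - (s+1)) + 1 := by omega
      rw [h1] at hz
      exact lstep hm hg (by omega) huv (by omega) (by omega) hlong hz
  obtain ⟨z, hz⟩ := hL u le_rfl
  rw [Nat.sub_self] at hz
  exact ⟨z, hz⟩

end Build

/-- `H_{α_{uv}, m}` is a separating wall of a dominant `m`-Shi region iff its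
Shi tableau satisfies `e_{uv} = m` and `e_{ut} + e_{t+1,v} = m - 1` for all `u ≤ t < v`. -/
theorem sepwall_iff_crit (n m : ℕ) (hn : 2 ≤ n) (hm : 1 ≤ m) (x : ℕ → ℝ)
    (e : ℕ → ℕ → ℤ) (hx : RegionPoint n m x) (he : TabOf n m x e)
    (u v : ℕ) (huv : u ≤ v) (hv : v + 2 ≤ n) :
    SepWall n m x u v ↔ SepCrit m e u v := by
  have hg := good_of_region hx
  have hmZ : (1:ℤ) ≤ (m:ℤ) := by exact_mod_cast hm
  constructor
  · rintro ⟨hgt, p, ⟨hpsum, hcl⟩, hpm, hgen⟩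
    constructor
    · rw [he u v huv hv]
      exact min_eq_right (Int.le_floor.2 (by exact_mod_cast hgt.le))
    · intro t hut htv
      have htn : t + 2 ≤ n := by omega
      have ht1v : t + 1 ≤ v := by omega
      have hadd : inn p u t + inn p (t+1) v = inn p u v := by
        simp only [inn]; ring
      have hxut_pos := hx.2.1 u t hut htn
      have hxtv_pos := hx.2.1 (t+1) v ht1v hv
      have hxut_lt : inn x u t < (m:ℝ) := by
        by_contra hcon
        push_neg at hcon
        have hne0 := hx.2.2 u t hut htn (m:ℤ) (by omega) le_rfl
        have hmlt : (m:ℝ) < inn x u t := lt_of_le_of_ne hcon (by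
          intro h; exact hne0 (by exact_mod_cast h.symm))
        have h1 := (hcl u t hut htn (m:ℤ) (by omega) le_rfl).1 (by exact_mod_cast hmlt)
        have h2 := (hcl (t+1) v ht1v hv 0 (by omega) (by omega)).1
          (by exact_mod_cast hxtv_pos)
        push_cast at h1 h2
        have h3 : inn p (t+1) v ≤ 0 := by linarith [hadd, hpm]
        have h4 : inn p (t+1) v = 0 := le_antisymm h3 h2
        exact hgen (t+1) v ht1v hv 0 (by omega) (by omega)
          (by rintro ⟨ha, -, -⟩; omega) (by rw [h4]; norm_num)
      have hxtv_lt : inn x (t+1) v < (m:ℝ) := by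
        by_contra hcon
        push_neg at hcon
        have hne0 := hx.2.2 (t+1) v ht1v hv (m:ℤ) (by omega) le_rfl
        have hmlt : (m:ℝ) < inn x (t+1) v := lt_of_le_of_ne hcon (by
          intro h; exact hne0 (by exact_mod_cast h.symm))
        have h1 := (hcl (t+1) v ht1v hv (m:ℤ) (by omega) le_rfl).1 (by exact_mod_cast hmlt)
        have h2 := (hcl u t hut htn 0 (by omega) (by omega)).1
          (by exact_mod_cast hxut_pos)
        push_cast at h1 h2
        have h3 : inn p u t ≤ 0 := by linarith [hadd, hpm]
        have h4 : inn p u t = 0 := le_antisymm h3 h2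
        exact hgen u t hut htn 0 (by omega) (by omega)
          (by rintro ⟨-, hv', -⟩; omega) (by rw [h4]; norm_num)
      have hfa_lt : ⌊inn x u t⌋ < (m:ℤ) := Int.floor_lt.2 (by exact_mod_cast hxut_lt)
      have hfa_nn : 0 ≤ ⌊inn x u t⌋ := Int.floor_nonneg.2 hxut_pos.le
      have hfb_lt : ⌊inn x (t+1) v⌋ < (m:ℤ) := Int.floor_lt.2 (by exact_mod_cast hxtv_lt)
      have hfb_nn : 0 ≤ ⌊inn x (t+1) v⌋ := Int.floor_nonneg.2 hxtv_pos.le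
      have hea : e u t = ⌊inn x u t⌋ := by
        rw [he u t hut htn]; exact min_eq_left (by omega)
      have heb : e (t+1) v = ⌊inn x (t+1) v⌋ := by
        rw [he (t+1) v ht1v hv]; exact min_eq_left (by omega)
      have hxa1 : (⌊inn x u t⌋ : ℝ) < inn x u t :=
        lt_of_le_of_ne (Int.floor_le _)
          (fun h => hx.2.2 u t hut htn ⌊inn x u t⌋ (by omega) (by omega) h.symm)
      have hxa2 : inn x u t < (⌊inn x u t⌋ : ℝ) + 1 := Int.lt_floor_add_one _
      have hxb1 : (⌊inn x (t+1) v⌋ : ℝ) < inn x (t+1) v :=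
        lt_of_le_of_ne (Int.floor_le _)
          (fun h => hx.2.2 (t+1) v ht1v hv ⌊inn x (t+1) v⌋ (by omega) (by omega) h.symm)
      have hxb2 : inn x (t+1) v < (⌊inn x (t+1) v⌋ : ℝ) + 1 := Int.lt_floor_add_one _
      have hpa1 : (⌊inn x u t⌋ : ℝ) ≤ inn p u t :=
        (hcl u t hut htn ⌊inn x u t⌋ (by omega) (by omega)).1 hxa1
      have hpa2 : inn p u t ≤ (⌊inn x u t⌋ : ℝ) + 1 := by
        have := (hcl u t hut htn (⌊inn x u t⌋ + 1) (by omega) (by omega)).2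
          (by push_cast; linarith)
        push_cast at this; linarith
      have hpb1 : (⌊inn x (t+1) v⌋ : ℝ) ≤ inn p (t+1) v :=
        (hcl (t+1) v ht1v hv ⌊inn x (t+1) v⌋ (by omega) (by omega)).1 hxb1
      have hpb2 : inn p (t+1) v ≤ (⌊inn x (t+1) v⌋ : ℝ) + 1 := by
        have := (hcl (t+1) v ht1v hv (⌊inn x (t+1) v⌋ + 1) (by omega) (by omega)).2
          (by push_cast; linarith)
        push_cast at this; linarith
      have hpa1' : (⌊inn x u t⌋ : ℝ) < inn p u t :=
        lt_of_le_of_ne hpa1 (fun h =>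
          hgen u t hut htn ⌊inn x u t⌋ (by omega) (by omega)
            (by rintro ⟨-, hv', -⟩; omega) h.symm)
      have hpa2' : inn p u t < (⌊inn x u t⌋ : ℝ) + 1 :=
        lt_of_le_of_ne hpa2 (fun h =>
          hgen u t hut htn (⌊inn x u t⌋ + 1) (by omega) (by omega)
            (by rintro ⟨-, hv', -⟩; omega) (by push_cast; exact h))
      have hpb1' : (⌊inn x (t+1) v⌋ : ℝ) < inn p (t+1) v :=
        lt_of_le_of_ne hpb1 (fun h =>
          hgen (t+1) v ht1v hv ⌊inn x (t+1) v⌋ (by omega) (by omega)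
            (by rintro ⟨ha, -, -⟩; omega) h.symm)
      have hpb2' : inn p (t+1) v < (⌊inn x (t+1) v⌋ : ℝ) + 1 :=
        lt_of_le_of_ne hpb2 (fun h =>
          hgen (t+1) v ht1v hv (⌊inn x (t+1) v⌋ + 1) (by omega) (by omega)
            (by rintro ⟨ha, -, -⟩; omega) (by push_cast; exact h))
      have hsum1 : (⌊inn x u t⌋ : ℝ) + (⌊inn x (t+1) v⌋ : ℝ) < (m:ℝ) := by
        have h := hadd; rw [hpm] at h; linarith
      have hsum2 : (m:ℝ) < (⌊inn x u t⌋ : ℝ) + (⌊inn x (t+1) v⌋ : ℝ) + 2 := by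
        have h := hadd; rw [hpm] at h; linarith
      have i1 : ⌊inn x u t⌋ + ⌊inn x (t+1) v⌋ < (m:ℤ) := by exact_mod_cast hsum1
      have i2 : (m:ℤ) < ⌊inn x u t⌋ + ⌊inn x (t+1) v⌋ + 2 := by exact_mod_cast hsum2
      rw [hea, heb]
      omega
  · rintro ⟨hem, hcrit⟩
    have hEuv : Ee m x u (v+1) = (m:ℤ) := by rw [← hem, he u v huv hv]; rfl
    have hgt : (m:ℝ) < x u - x (v+1) :=
      Ee_long hm hg (show u < v+1 by omega) (show (v+1)+1 ≤ n by omega) hEuv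
    obtain ⟨z, hz⟩ := build_all hn hm hg he huv hv hgt hcrit
    have hn0 : (n:ℝ) ≠ 0 := Nat.cast_ne_zero.2 (by omega)
    set S : ℝ := (∑ j ∈ Finset.range n, z j) with hS
    have hip : ∀ i j : ℕ, inn (fun i => z i - S / n) i j = z i - z (j+1) := by
      intro i j; simp only [inn]; ring
    refine ⟨by simpa [inn] using hgt, fun i => z i - S / n, ⟨?_, ?_⟩, ?_, ?_⟩
    · rw [SumZero, Finset.sum_sub_distrib, Finset.sum_const, Finset.card_range,
        nsmul_eq_mul, ← hS]
      field_simp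
      ring
    · intro i j hij hjn t' ht1 ht2
      rw [hip]
      obtain ⟨hex, hlongB, hshortB⟩ := hz i (j+1) (Nat.zero_le _) (by omega) (by omega)
      have htR : (t':ℝ) ≤ (m:ℝ) := by exact_mod_cast ht2
      have hinn : inn x i j = x i - x (j+1) := rfl
      by_cases hexc : i = u ∧ j + 1 = v + 1
      · have hzz := hex hexc
        constructor
        · intro _; rw [hzz]; exact htR
        · intro hlt
          exfalso
          obtain ⟨hiu, hjv⟩ := hexc
          have hxe : inn x i j = x u - x (v+1) := by rw [hinn, hiu, hjv]
          rw [hxe] at hlt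
          linarith
      rcases eq_or_lt_of_le (Ee_le : Ee m x i (j+1) ≤ (m:ℤ)) with hE | hE
      · have hzz := hlongB hexc hE
        have hxgt := Ee_long hm hg (show i < j+1 by omega) (show (j+1)+1 ≤ n by omega) hE
        rw [← hinn] at hxgt
        constructor
        · intro _; linarith
        · intro hlt; exfalso; linarith
      · have hzz := hshortB hexc hE
        have hxs := Ee_short hm hg (show i < j+1 by omega) (show (j+1)+1 ≤ n by omega) hE
        rw [← hinn] at hxs
        constructor
        · intro hlt
          have h1 : (t':ℝ) < (Ee m x i (j+1) : ℝ) + 1 := lt_trans hlt hxs.2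
          have h2 : t' < Ee m x i (j+1) + 1 := by exact_mod_cast h1
          have h3 : (t':ℝ) ≤ (Ee m x i (j+1) : ℝ) := by exact_mod_cast (by omega : t' ≤ Ee m x i (j+1))
          linarith [hzz.1]
        · intro hlt
          have h1 : (Ee m x i (j+1) : ℝ) < (t':ℝ) := lt_trans hxs.1 hlt
          have h2 : Ee m x i (j+1) < t' := by exact_mod_cast h1
          have h3 : (Ee m x i (j+1) : ℝ) + 1 ≤ (t':ℝ) := by
            exact_mod_cast (by omega : Ee m x i (j+1) + 1 ≤ t')
          linarith [hzz.2]
    · rw [hip]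
      obtain ⟨hex, -, -⟩ := hz u (v+1) (Nat.zero_le _) (by omega) (by omega)
      exact hex ⟨rfl, rfl⟩
    · intro i j hij hjn t' ht1 ht2 hne
      rw [hip]
      obtain ⟨hex, hlongB, hshortB⟩ := hz i (j+1) (Nat.zero_le _) (by omega) (by omega)
      by_cases hexc : i = u ∧ j + 1 = v + 1
      · have hzz := hex hexc
        have htm : t' ≠ (m:ℤ) := fun h => hne ⟨hexc.1, by omega, h⟩
        rw [hzz]
        intro h
        exact htm (by exact_mod_cast h.symm)
      rcases eq_or_lt_of_le (Ee_le : Ee m x i (j+1) ≤ (m:ℤ)) with hE | hE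
      · have hzz := hlongB hexc hE
        intro h
        rw [h] at hzz
        have : (t':ℝ) ≤ (m:ℝ) := by exact_mod_cast ht2
        linarith
      · have hzz := hshortB hexc hE
        intro h
        rw [h] at hzz
        have h1 : Ee m x i (j+1) < t' := by exact_mod_cast hzz.1
        have h2 : (t':ℝ) < (Ee m x i (j+1) : ℝ) + 1 := hzz.2
        have h3 : t' < Ee m x i (j+1) + 1 := by exact_mod_cast h2
        omega


end Shi
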